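/- Let $T$ be a finite tree with at most $t$ leaves, where $t \ge 2$, and let $m \ge 2$. Then there exists $s \ge 0$ and vertex-disjoint bare paths $P_1, \dots, P_s$ in $T$, each of length $m$, such that removing the internal vertices of all these paths leaves at most $6mt + 2|V(T)|/(m+1)$ vertices. -/

import Mathlib

section TreeLemmas
variable {V : Type*} [DecidableEq V] {T : SimpleGraph V}

set_option linter.unusedSectionVars false

lemma tree_path_length_eq_dist (hT : T.IsTree) {x y : V} (p : T.Walk x y) (hp : p.IsPath) :
    p.length = T.dist x y := by
  obtain ⟨q, hq, hql⟩ := hT.isConnected.exists_path_of_dist x y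
  rw [(hT.existsUnique_path x y).unique hp hq, hql]

lemma tree_parent_unique (hT : T.IsTree) (r : V) {a b v : V}
    (ha : T.Adj a v) (hb : T.Adj b v)
    (hda : T.dist r a + 1 = T.dist r v) (hdb : T.dist r b + 1 = T.dist r v) : a = b := by
  obtain ⟨pa, hpa, hpal⟩ := hT.isConnected.exists_path_of_dist r a
  obtain ⟨pb, hpb, hpbl⟩ := hT.isConnected.exists_path_of_dist r b
  have hva : v ∉ pa.support := by
    intro hv
    have h1 : (pa.takeUntil v hv).length = T.dist r v :=
      tree_path_length_eq_dist hT _ (hpa.takeUntil hv)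
    have h2 := pa.length_takeUntil_le hv
    omega
  have hvb : v ∉ pb.support := by
    intro hv
    have h1 : (pb.takeUntil v hv).length = T.dist r v :=
      tree_path_length_eq_dist hT _ (hpb.takeUntil hv)
    have h2 := pb.length_takeUntil_le hv
    omega
  have hqa : (pa.concat ha).IsPath := by
    apply SimpleGraph.Walk.IsPath.mk'
    rw [SimpleGraph.Walk.support_concat]
    rw [List.nodup_append]
    exact ⟨hpa.support_nodup, List.nodup_singleton v, by rintro x hx y hy rfl; simp at hy; exact hva (hy ▸ hx)⟩
  have hqb : (pb.concat hb).IsPath := by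
    apply SimpleGraph.Walk.IsPath.mk'
    rw [SimpleGraph.Walk.support_concat]
    rw [List.nodup_append]
    exact ⟨hpb.support_nodup, List.nodup_singleton v, by rintro x hx y hy rfl; simp at hy; exact hvb (hy ▸ hx)⟩
  have heq : pa.concat ha = pb.concat hb := (hT.existsUnique_path r v).unique hqa hqb
  have hsup := congrArg (fun w => SimpleGraph.Walk.support w) heq
  simp only [SimpleGraph.Walk.support_concat] at hsup
  have hsup2 : pa.support = pb.support := by
    have := congrArg List.dropLast hsup
    simpa using this
  have h3 := congrArg List.reverse hsup2
  rw [← SimpleGraph.Walk.support_reverse, ← SimpleGraph.Walk.support_reverse] at h3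
  rw [SimpleGraph.Walk.support_eq_cons pa.reverse, SimpleGraph.Walk.support_eq_cons pb.reverse] at h3
  exact List.head_eq_of_cons_eq h3

lemma tree_adj_dist (hT : T.IsTree) (r : V) {a v : V} (h : T.Adj a v) :
    T.dist r v = T.dist r a + 1 ∨ T.dist r a = T.dist r v + 1 := by
  obtain ⟨pa, hpa, hpal⟩ := hT.isConnected.exists_path_of_dist r a
  by_cases hv : v ∈ pa.support
  · right
    have h1 : (pa.takeUntil v hv).length = T.dist r v :=
      tree_path_length_eq_dist hT _ (hpa.takeUntil hv)
    have h2 : (pa.takeUntil v hv).length + (pa.dropUntil v hv).length = pa.length := by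
      rw [← SimpleGraph.Walk.length_append, pa.take_spec hv]
    have h3 : (pa.dropUntil v hv).length ≠ 0 := by
      intro h0
      exact h.ne' (SimpleGraph.Walk.eq_of_length_eq_zero h0)
    have h4 : T.dist r a ≤ T.dist r v + 1 := by
      calc T.dist r a ≤ T.dist r v + T.dist v a := hT.isConnected.dist_triangle
        _ = T.dist r v + 1 := by rw [SimpleGraph.dist_eq_one_iff_adj.mpr h.symm]
    omega
  · left
    have hqa : (pa.concat h).IsPath := by
      apply SimpleGraph.Walk.IsPath.mk'
      rw [SimpleGraph.Walk.support_concat, List.nodup_append]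
      exact ⟨hpa.support_nodup, List.nodup_singleton v, by rintro x hx y hy rfl; simp at hy; exact hv (hy ▸ hx)⟩
    have := tree_path_length_eq_dist hT _ hqa
    rw [SimpleGraph.Walk.length_concat] at this
    omega

end TreeLemmas

section Enum
variable {V : Type*} [DecidableEq V]

private def bpChain (D : Finset V) (f : V → V) : ℕ → V → List V
  | 0, v => [v]
  | (k+1), v => if v ∈ D then v :: bpChain D f k (f v) else [v]

private lemma bpChain_cons (D : Finset V) (f : V → V) (k : ℕ) (v : V) :
    ∃ tl, bpChain D f k v = v :: tl := by
  cases k with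
  | zero => exact ⟨[], rfl⟩
  | succ k =>
    by_cases h : v ∈ D
    · exact ⟨bpChain D f k (f v), by simp [bpChain, h]⟩
    · exact ⟨[], by simp [bpChain, h]⟩

private lemma bpChain_ne_nil (D : Finset V) (f : V → V) (k : ℕ) (v : V) :
    bpChain D f k v ≠ [] := by
  obtain ⟨tl, htl⟩ := bpChain_cons D f k v
  simp [htl]

private lemma bpChain_mem_h (D : Finset V) (f : V → V) (h : V → ℕ)
    (hmono : ∀ v ∈ D, h (f v) = h v + 1) :
    ∀ (k : ℕ) (v x : V), x ∈ bpChain D f k v → h v ≤ h x := by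
  intro k
  induction k with
  | zero => intro v x hx; simp [bpChain] at hx; subst hx; exact le_refl _
  | succ k ih =>
    intro v x hx
    by_cases hv : v ∈ D
    · simp only [bpChain, if_pos hv, List.mem_cons] at hx
      rcases hx with rfl | hx
      · exact le_refl _
      · have := ih (f v) x hx
        have := hmono v hv
        omega
    · simp [bpChain, if_neg hv] at hx
      subst hx; exact le_refl _

private lemma bpChain_nodup (D : Finset V) (f : V → V) (h : V → ℕ)
    (hmono : ∀ v ∈ D, h (f v) = h v + 1) :
    ∀ (k : ℕ) (v : V), (bpChain D f k v).Nodup := by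
  intro k
  induction k with
  | zero => intro v; simp [bpChain]
  | succ k ih =>
    intro v
    by_cases hv : v ∈ D
    · simp only [bpChain, if_pos hv, List.nodup_cons]
      refine ⟨fun hmem => ?_, ih (f v)⟩
      have := bpChain_mem_h D f h hmono k (f v) v hmem
      have := hmono v hv
      omega
    · simp [bpChain, if_neg hv]

private lemma bpChain_subset (D : Finset V) (f : V → V) (s : Finset V)
    (hcl : ∀ v ∈ s, v ∈ D → f v ∈ s) :
    ∀ (k : ℕ) (v : V), v ∈ s → ∀ x ∈ bpChain D f k v, x ∈ s := by
  intro k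
  induction k with
  | zero => intro v hv x hx; simp [bpChain] at hx; rwa [hx]
  | succ k ih =>
    intro v hv x hx
    by_cases hvD : v ∈ D
    · simp only [bpChain, if_pos hvD, List.mem_cons] at hx
      rcases hx with rfl | hx
      · exact hv
      · exact ih (f v) (hcl v hv hvD) x hx
    · simp [bpChain, if_neg hvD] at hx; rwa [hx]

private lemma bpChain_chain' (D : Finset V) (f : V → V) :
    ∀ (k : ℕ) (v : V), (bpChain D f k v).Chain' (fun a b => a ∈ D → b = f a) := by
  intro k
  induction k with
  | zero => intro v; exact List.isChain_singleton v
  | succ k ih =>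
    intro v
    by_cases hv : v ∈ D
    · simp only [bpChain, if_pos hv]
      refine List.isChain_cons.mpr ⟨fun y hy _ => ?_, ih (f v)⟩
      obtain ⟨tl, htl⟩ := bpChain_cons D f k (f v)
      rw [htl] at hy
      simp at hy
      exact hy.symm
    · have hch : bpChain D f (k+1) v = [v] := by simp [bpChain, if_neg hv]
      rw [hch]
      exact List.isChain_singleton v

private lemma bpChain_getLast (D : Finset V) (f : V → V) :
    ∀ (k : ℕ) (v x : V), (bpChain D f k v).getLast? = some x → x ∈ D →
      (bpChain D f k v).length = k + 1 := by
  intro k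
  induction k with
  | zero => intro v x _ _; simp [bpChain]
  | succ k ih =>
    intro v x hlast hxD
    by_cases hv : v ∈ D
    · obtain ⟨tl, htl⟩ := bpChain_cons D f k (f v)
      have hch : bpChain D f (k+1) v = v :: bpChain D f k (f v) := by
        simp [bpChain, if_pos hv]
      rw [hch, htl, List.getLast?_cons_cons, ← htl] at hlast
      have := ih (f v) x hlast hxD
      rw [hch]
      simp [this]
    · have hch : bpChain D f (k+1) v = [v] := by simp [bpChain, if_neg hv]
      rw [hch] at hlast
      simp at hlast
      subst hlast
      exact absurd hxD hv

private lemma bpChain_mem_src (D : Finset V) (f : V → V) :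
    ∀ (k : ℕ) (v x : V), x ∈ bpChain D f k v →
      x = v ∨ ∃ y, y ∈ D ∧ y ∈ bpChain D f k v ∧ x = f y := by
  intro k
  induction k with
  | zero => intro v x hx; simp [bpChain] at hx; exact Or.inl hx
  | succ k ih =>
    intro v x hx
    by_cases hv : v ∈ D
    · simp only [bpChain, if_pos hv, List.mem_cons] at hx ⊢
      rcases hx with rfl | hx
      · exact Or.inl rfl
      · obtain ⟨tl, htl⟩ := bpChain_cons D f k (f v)
        rcases ih (f v) x hx with rfl | ⟨y, hyD, hymem, rfl⟩
        · exact Or.inr ⟨v, hv, Or.inl rfl, rfl⟩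
        · exact Or.inr ⟨y, hyD, Or.inr hymem, rfl⟩
    · simp [bpChain, if_neg hv] at hx
      exact Or.inl hx

private lemma bpEnum (D : Finset V) (f : V → V) (h : V → ℕ)
    (hinj : ∀ v ∈ D, ∀ w ∈ D, f v = f w → v = w)
    (hmono : ∀ v ∈ D, h (f v) = h v + 1) :
    ∀ (n : ℕ) (s : Finset V), s.card ≤ n → (∀ v ∈ s, v ∈ D → f v ∈ s) →
    ∃ L : List V, L.Nodup ∧ L.toFinset = s ∧ L.Chain' (fun a b => a ∈ D → b = f a) := by
  intro n
  induction n with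
  | zero =>
    intro s hcard _
    have : s = ∅ := Finset.card_eq_zero.mp (Nat.le_zero.mp hcard)
    exact ⟨[], List.nodup_nil, by simp [this], List.isChain_nil⟩
  | succ n ih =>
    intro s hcard hcl
    rcases s.eq_empty_or_nonempty with rfl | hne
    · exact ⟨[], List.nodup_nil, by simp, List.isChain_nil⟩
    obtain ⟨v₀, hv₀s, hv₀min⟩ := s.exists_min_image h hne
    set c := bpChain D f s.card v₀ with hc
    have hcsub : ∀ x ∈ c, x ∈ s := bpChain_subset D f s hcl s.card v₀ hv₀s
    have hcnd : c.Nodup := bpChain_nodup D f h hmono s.card v₀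
    have hv₀c : v₀ ∈ c := by
      obtain ⟨tl, htl⟩ := bpChain_cons D f s.card v₀
      rw [hc, htl]; exact List.mem_cons_self
    have hclen : c.length ≤ s.card := by
      rw [← List.toFinset_card_of_nodup hcnd]
      apply Finset.card_le_card
      intro x hx
      exact hcsub x (List.mem_toFinset.mp hx)
    have hlast : ∀ x, c.getLast? = some x → x ∉ D := by
      intro x hx hmem
      have := bpChain_getLast D f s.card v₀ x hx hmem
      rw [← hc] at this
      omega
    set s' := s \ c.toFinset with hs'
    have hs'card : s'.card ≤ n := by
      have h1 : s' ⊆ s.erase v₀ := by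
        intro x hx
        rw [Finset.mem_sdiff] at hx
        refine Finset.mem_erase.mpr ⟨?_, hx.1⟩
        intro hxv
        exact hx.2 (List.mem_toFinset.mpr (hxv ▸ hv₀c))
      have h2 := Finset.card_le_card h1
      rw [Finset.card_erase_of_mem hv₀s] at h2
      omega
    have hs'cl : ∀ v ∈ s', v ∈ D → f v ∈ s' := by
      intro v hv hvD
      rw [Finset.mem_sdiff] at hv ⊢
      refine ⟨hcl v hv.1 hvD, fun hfc => ?_⟩
      rcases bpChain_mem_src D f s.card v₀ (f v) (List.mem_toFinset.mp hfc) with heq | ⟨y, hyD, hyc, heq⟩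
      · have h1 := hmono v hvD
        have h2 := hv₀min v hv.1
        rw [heq] at h1
        omega
      · have := hinj v hvD y hyD heq
        exact hv.2 (List.mem_toFinset.mpr (this ▸ hyc))
    obtain ⟨L', hL'nd, hL'fin, hL'ch⟩ := ih s' hs'card hs'cl
    refine ⟨c ++ L', ?_, ?_, ?_⟩
    · rw [List.nodup_append]
      refine ⟨hcnd, hL'nd, fun x hx y hxL' hxy => ?_⟩
      subst hxy
      have : x ∈ s' := hL'fin ▸ List.mem_toFinset.mpr hxL'
      rw [Finset.mem_sdiff] at this
      exact this.2 (List.mem_toFinset.mpr hx)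
    · rw [List.toFinset_append, hL'fin, hs']
      apply Finset.union_sdiff_of_subset
      intro x hx
      exact hcsub x (List.mem_toFinset.mp hx)
    · apply List.IsChain.append (bpChain_chain' D f s.card v₀) hL'ch
      intro x hx y _
      exact fun hxD => absurd hxD (hlast x hx)

end Enum

section Seg
variable {V : Type*} {T : SimpleGraph V}

private lemma walkSeg (g : ℕ → V) :
    ∀ (k a : ℕ), (∀ i, i < k → T.Adj (g (a+i)) (g (a+i+1))) →
    ∃ w : T.Walk (g a) (g (a+k)), w.support = (List.range' a (k+1)).map g := by
  intro k
  induction k with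
  | zero => intro a _; exact ⟨SimpleGraph.Walk.nil, by simp⟩
  | succ k ih =>
    intro a hadj
    obtain ⟨w, hw⟩ := ih a (fun i hi => hadj i (Nat.lt_succ_of_lt hi))
    refine ⟨w.concat (hadj k (Nat.lt_succ_self k)), ?_⟩
    have hr : List.range' a (k+1+1) = List.range' a (k+1) ++ [a+k+1] := by
      rw [List.range'_1_concat, ← Nat.add_assoc]
    rw [SimpleGraph.Walk.support_concat, hw, hr, List.map_append]
    simp [Nat.add_assoc]

end Seg

private lemma arith_final (N S Q M Tt R : ℝ) (h1 : (M+1)*Q + R = N) (h2 : R ≤ M)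
    (h3 : Q ≤ S + 2*Tt - 2) (h4 : 2 ≤ M) (h5 : 2 ≤ Tt) :
    N - S*(M-1) ≤ 6*M*Tt + 2*N/(M+1) := by
  have hm1 : (0:ℝ) < M + 1 := by linarith
  have hmain : (N - S*(M-1) - 6*M*Tt) * (M+1) ≤ 2*N := by
    nlinarith [mul_le_mul_of_nonneg_left h3 (by nlinarith : (0:ℝ) ≤ (M-1)*(M+1)),
      mul_le_mul_of_nonneg_left h2 (by linarith : (0:ℝ) ≤ M-1),
      mul_nonneg (mul_nonneg (by linarith : (0:ℝ) ≤ M) (by linarith : (0:ℝ) ≤ M+1)) (by linarith : (0:ℝ) ≤ Tt-2),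
      mul_nonneg (by linarith : (0:ℝ) ≤ M+1) (by linarith : (0:ℝ) ≤ Tt-2)]
  have h6' : N - S*(M-1) - 6*M*Tt ≤ 2*N/(M+1) := by
    rw [le_div_iff₀ hm1]
    exact hmain
  linarith

/-- A tree with at most `t ≥ 2` leaves contains vertex-disjoint bare paths of length `m ≥ 2`
whose internal vertices' removal leaves at most `6mt + 2|T|/(m+1)` vertices. -/
theorem stmt6 {V : Type*} [Fintype V] [DecidableEq V]
    (T : SimpleGraph V) [DecidableRel T.Adj] (hT : T.IsTree)
    (t m : ℕ) (ht : 2 ≤ t) (hm : 2 ≤ m)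
    (hleaves : (Finset.univ.filter fun v => T.degree v = 1).card ≤ t) :
    ∃ (s : ℕ) (P : Fin s → (u : V) × (v : V) × T.Walk u v),
      (∀ i, (P i).2.2.IsPath ∧ (P i).2.2.length = m ∧
        ∀ x ∈ (P i).2.2.support, x ≠ (P i).1 → x ≠ (P i).2.1 → T.degree x = 2) ∧
      (∀ i j, i ≠ j → List.Disjoint (P i).2.2.support (P j).2.2.support) ∧
      (Fintype.card V : ℝ) - s * ((m : ℝ) - 1) ≤
        6 * m * t + 2 * (Fintype.card V : ℝ) / (m + 1) := by
  classical
  by_cases hsmall : Fintype.card V ≤ 6 * m * t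
  · refine ⟨0, Fin.elim0, fun i => i.elim0, fun i => i.elim0, ?_⟩
    have h1 : (Fintype.card V : ℝ) ≤ 6 * m * t := by exact_mod_cast hsmall
    have h2 : (0:ℝ) ≤ 2 * (Fintype.card V : ℝ) / ((m:ℝ) + 1) := by positivity
    push_cast
    linarith
  push_neg at hsmall
  set n := Fintype.card V with hn
  have hn2 : 2 ≤ n := by nlinarith
  -- degrees are positive
  have hdegpos : ∀ v : V, 1 ≤ T.degree v := by
    intro v
    rw [Nat.one_le_iff_ne_zero, ← Nat.pos_iff_ne_zero, T.degree_pos_iff_exists_adj]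
    obtain ⟨w, hwne⟩ := Fintype.exists_ne_of_one_lt_card (by omega) v
    have hreach : T.Reachable v w := hT.isConnected v w
    obtain ⟨p⟩ := hreach
    cases p with
    | nil => exact absurd rfl hwne.symm
    | cons h q => exact ⟨_, h⟩
  -- handshake
  have hsum : ∑ v : V, T.degree v = 2 * (n - 1) := by
    rw [SimpleGraph.sum_degrees_eq_twice_card_edges]
    have := hT.card_edgeFinset
    omega
  set A1 := Finset.univ.filter (fun v => T.degree v = 1) with hA1
  set A3 := Finset.univ.filter (fun v => 3 ≤ T.degree v) with hA3
  have hkey : 2 * n + A3.card ≤ 2 * (n-1) + A1.card := by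
    have hpoint : ∀ v : V, 2 + (if 3 ≤ T.degree v then 1 else 0)
        ≤ T.degree v + (if T.degree v = 1 then 1 else 0) := by
      intro v; have := hdegpos v; split_ifs <;> omega
    have hle := Finset.sum_le_sum (fun v (_ : v ∈ Finset.univ) => hpoint v)
    rw [Finset.sum_add_distrib, Finset.sum_add_distrib, hsum, ← Finset.card_filter,
      ← Finset.card_filter, Finset.sum_const, Finset.card_univ, smul_eq_mul, mul_comm] at hle
    exact hle
  have hA31 : A3.card + 2 ≤ A1.card := by omega
  have hA1t : A1.card ≤ t := hleaves
  have hbadcard : (Finset.univ.filter (fun v => T.degree v ≠ 2)).card ≤ 2*t - 2 := by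
    have hsub : Finset.univ.filter (fun v => T.degree v ≠ 2) ⊆ A1 ∪ A3 := by
      intro v hv
      rw [Finset.mem_filter] at hv
      rw [Finset.mem_union, hA1, hA3, Finset.mem_filter, Finset.mem_filter]
      have := hdegpos v
      rcases Nat.lt_or_ge (T.degree v) 3 with h' | h'
      · left; exact ⟨Finset.mem_univ _, by omega⟩
      · right; exact ⟨Finset.mem_univ _, h'⟩
    have h1 := Finset.card_le_card hsub
    have h2 := Finset.card_union_le A1 A3
    omega
  -- a leaf r
  have hA1pos : 0 < A1.card := by omega
  obtain ⟨r, hrA1⟩ := Finset.card_pos.mp hA1pos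
  have hrdeg : T.degree r = 1 := by
    rw [hA1, Finset.mem_filter] at hrA1; exact hrA1.2
  set D := Finset.univ.filter (fun v => T.degree v = 2) with hD
  have hmemD : ∀ x : V, x ∈ D ↔ T.degree x = 2 := by
    intro x; rw [hD, Finset.mem_filter]; simp
  -- children
  have hchild : ∀ v, T.degree v = 2 → ∃ c, T.Adj v c ∧ T.dist r c = T.dist r v + 1 := by
    intro v hdeg
    by_contra hno
    push_neg at hno
    have hcard2 : (T.neighborFinset v).card = 2 := by
      rw [T.card_neighborFinset_eq_degree]; exact hdeg
    have hle : (T.neighborFinset v).card ≤ 1 := by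
      apply Finset.card_le_one.mpr
      intro a ha b hb
      rw [SimpleGraph.mem_neighborFinset] at ha hb
      have hda : T.dist r a + 1 = T.dist r v := by
        rcases tree_adj_dist hT r ha.symm with h1 | h1
        · omega
        · exact absurd h1 (hno a ha)
      have hdb : T.dist r b + 1 = T.dist r v := by
        rcases tree_adj_dist hT r hb.symm with h1 | h1
        · omega
        · exact absurd h1 (hno b hb)
      exact tree_parent_unique hT r ha.symm hb.symm hda hdb
    omega
  have hex : ∀ v ∈ D, ∃ c, T.Adj v c ∧ T.dist r c = T.dist r v + 1 := by
    intro v hv; exact hchild v ((hmemD v).mp hv)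
  set f : V → V := fun v => if hv : v ∈ D then (hex v hv).choose else v with hf
  have hfspec : ∀ v ∈ D, T.Adj v (f v) ∧ T.dist r (f v) = T.dist r v + 1 := by
    intro v hv
    simp only [hf, dif_pos hv]
    exact (hex v hv).choose_spec
  have hinj : ∀ v ∈ D, ∀ w ∈ D, f v = f w → v = w := by
    intro v hv w hw hvw
    have h1 := hfspec v hv
    have h2 := hfspec w hw
    rw [hvw] at h1
    exact tree_parent_unique hT r h1.1 h2.1 (by omega) (by omega)
  obtain ⟨L, hLnd, hLfin, hLch⟩ := bpEnum D f (T.dist r) hinj (fun v hv => (hfspec v hv).2)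
    n Finset.univ (by rw [hn, Finset.card_univ]) (fun v _ _ => Finset.mem_univ _)
  have hLlen : L.length = n := by
    rw [← List.toFinset_card_of_nodup hLnd, hLfin, hn, Finset.card_univ]
  set g : ℕ → V := fun i => L.getD i r with hg
  have hget : ∀ i, (h : i < n) → g i = L.get ⟨i, by omega⟩ := by
    intro i h
    simp only [hg]
    exact List.getD_eq_get (l := L) (d := r) ⟨i, by omega⟩
  have hginj : ∀ i, i < n → ∀ j, j < n → g i = g j → i = j := by
    intro i hi j hj hij
    rw [hget i hi, hget j hj] at hij
    simpa using (List.Nodup.get_inj_iff hLnd).mp hij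
  have hgadj : ∀ i, i + 1 < n → T.degree (g i) = 2 → T.Adj (g i) (g (i+1)) := by
    intro i hi hdeg
    have hch : g i ∈ D → g (i+1) = f (g i) := by
      rw [hget i (by omega), hget (i+1) (by omega)]; exact (List.isChain_iff_getElem.mp hLch) i (by omega)
    have hD' : g i ∈ D := (hmemD _).mpr hdeg
    have h2 := hch hD'
    rw [h2]
    exact (hfspec (g i) hD').1
  -- blocks
  set q := n / (m+1) with hq
  have hdiv := Nat.div_add_mod n (m+1)
  have hmod : n % (m+1) < m + 1 := Nat.mod_lt _ (by omega)
  have hqmul : q * (m+1) ≤ n := Nat.div_mul_le_self n (m+1)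
  have hidx : ∀ j, j < q → j*(m+1) + m < n := by
    intro j hj
    have h1 : (j+1)*(m+1) ≤ q*(m+1) := Nat.mul_le_mul_right _ (by omega)
    have h2 : (j+1)*(m+1) = j*(m+1) + (m+1) := by ring
    linarith
  set B := (Finset.range q).filter (fun j => ∀ i, i < m → T.degree (g (j*(m+1) + i)) = 2)
    with hB
  set s := B.card with hs
  have hdivj : ∀ jj kk, kk < m+1 → (jj*(m+1) + kk) / (m+1) = jj := by
    intro jj kk hkk
    rw [Nat.mul_comm jj (m+1), Nat.mul_add_div (by omega)]
    simp [Nat.div_eq_of_lt hkk]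
  have hwalk : ∀ j ∈ B, ∃ w : T.Walk (g (j*(m+1))) (g (j*(m+1)+m)),
      w.support = (List.range' (j*(m+1)) (m+1)).map g := by
    intro j hj
    rw [hB, Finset.mem_filter, Finset.mem_range] at hj
    apply walkSeg
    intro i hi
    apply hgadj
    · have := hidx j hj.1; omega
    · exact hj.2 i hi
  choose w hw using hwalk
  set bf := B.orderEmbOfFin hs.symm with hbf
  have hbfmem : ∀ i : Fin s, bf i ∈ B := fun i => Finset.orderEmbOfFin_mem B hs.symm i
  have hbfq : ∀ i : Fin s, bf i < q := by
    intro i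
    have := hbfmem i
    rw [hB, Finset.mem_filter, Finset.mem_range] at this
    exact this.1
  have hbfgood : ∀ (i : Fin s) (k : ℕ), k < m → T.degree (g ((bf i)*(m+1) + k)) = 2 := by
    intro i k hk
    have := hbfmem i
    rw [hB, Finset.mem_filter] at this
    exact this.2 k hk
  refine ⟨s, fun i => ⟨g ((bf i)*(m+1)), g ((bf i)*(m+1)+m), w (bf i) (hbfmem i)⟩, ?_, ?_, ?_⟩
  · intro i
    dsimp only
    have hwsup := hw (bf i) (hbfmem i)
    have hidxi := hidx (bf i) (hbfq i)
    refine ⟨?_, ?_, ?_⟩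
    · apply SimpleGraph.Walk.IsPath.mk'
      rw [hwsup]
      apply List.Nodup.map_on
      · intro x hx y hy hxy
        rw [List.mem_range'_1] at hx hy
        exact hginj x (by omega) y (by omega) hxy
      · exact List.nodup_range' (h := Nat.one_pos)
    · have hlen := congrArg List.length hwsup
      rw [SimpleGraph.Walk.length_support, List.length_map, List.length_range'] at hlen
      omega
    · intro x hx _ hx2
      rw [hwsup] at hx
      obtain ⟨idx, hidx', rfl⟩ := List.mem_map.mp hx
      rw [List.mem_range'_1] at hidx'
      set a := (bf i)*(m+1) with ha
      have hk : idx = a + (idx - a) := by omega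
      have hklt : idx - a < m + 1 := by omega
      rcases Nat.lt_or_ge (idx - a) m with hkm | hkm
      · rw [hk]
        exact hbfgood i (idx - a) hkm
      · have : idx - a = m := by omega
        rw [hk, this] at hx2 ⊢
        exact absurd rfl hx2
  · intro i j hne
    dsimp only
    rw [hw (bf i) (hbfmem i), hw (bf j) (hbfmem j)]
    intro x hxi hxj
    obtain ⟨idx1, h1, heq1⟩ := List.mem_map.mp hxi
    obtain ⟨idx2, h2, heq2⟩ := List.mem_map.mp hxj
    rw [List.mem_range'_1] at h1 h2
    have hidxi := hidx (bf i) (hbfq i)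
    have hidxj := hidx (bf j) (hbfq j)
    have heq : idx1 = idx2 := by
      apply hginj idx1 (by omega) idx2 (by omega)
      rw [heq1, heq2]
    have hd1 : idx1 / (m+1) = bf i := by
      have hk : idx1 = (bf i)*(m+1) + (idx1 - (bf i)*(m+1)) := by omega
      rw [hk, hdivj _ _ (by omega)]
    have hd2 : idx2 / (m+1) = bf j := by
      have hk : idx2 = (bf j)*(m+1) + (idx2 - (bf j)*(m+1)) := by omega
      rw [hk, hdivj _ _ (by omega)]
    apply hne
    apply bf.injective
    rw [← hd1, ← hd2, heq]
  · -- counting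
    set BB := Finset.range q \ B with hBB
    have hBsub : B ⊆ Finset.range q := Finset.filter_subset _ _
    have hBBcard : BB.card = q - s := by
      rw [hBB, Finset.card_sdiff_of_subset hBsub, Finset.card_range, hs]
    have hsq : s ≤ q := by
      rw [hs]
      calc B.card ≤ (Finset.range q).card := Finset.card_le_card hBsub
        _ = q := Finset.card_range q
    set badV := Finset.univ.filter (fun v => T.degree v ≠ 2) with hbadV
    obtain ⟨F, hFspec⟩ : ∃ F : ℕ → V, ∀ j ∈ BB, ∃ i, i < m ∧ F j = g (j*(m+1)+i) ∧
        T.degree (F j) ≠ 2 := by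
      refine ⟨fun j => if hj : ∃ i, i < m ∧ T.degree (g (j*(m+1) + i)) ≠ 2 then
        g (j*(m+1) + hj.choose) else r, ?_⟩
      intro j hj
      beta_reduce
      rw [hBB, Finset.mem_sdiff, Finset.mem_range] at hj
      have hnogood : ∃ i, i < m ∧ T.degree (g (j*(m+1) + i)) ≠ 2 := by
        by_contra hno
        push_neg at hno
        apply hj.2
        rw [hB, Finset.mem_filter, Finset.mem_range]
        exact ⟨hj.1, fun i hi => hno i hi⟩
      have hFeq : (if hj : ∃ i, i < m ∧ T.degree (g (j*(m+1) + i)) ≠ 2 then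
          g (j*(m+1) + hj.choose) else r) = g (j*(m+1) + hnogood.choose) := dif_pos hnogood
      exact ⟨hnogood.choose, hnogood.choose_spec.1, hFeq, by
        rw [hFeq]; exact hnogood.choose_spec.2⟩
    have hBBbad : BB.card ≤ badV.card := by
      apply Finset.card_le_card_of_injOn F
      · intro j hj
        obtain ⟨i, hi, hFj, hFd⟩ := hFspec j hj
        rw [hbadV, Finset.mem_coe, Finset.mem_filter]
        exact ⟨Finset.mem_univ _, hFd⟩
      · intro j1 hj1' j2 hj2' hF12
        have hj1 : j1 ∈ BB := hj1'
        have hj2 : j2 ∈ BB := hj2'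
        obtain ⟨i1, hi1, hFj1, _⟩ := hFspec j1 hj1
        obtain ⟨i2, hi2, hFj2, _⟩ := hFspec j2 hj2
        have hj1q : j1 < q := by
          rw [hBB, Finset.mem_sdiff, Finset.mem_range] at hj1; exact hj1.1
        have hj2q : j2 < q := by
          rw [hBB, Finset.mem_sdiff, Finset.mem_range] at hj2; exact hj2.1
        have hn1 := hidx j1 hj1q
        have hn2 := hidx j2 hj2q
        have heq : j1*(m+1)+i1 = j2*(m+1)+i2 := by
          apply hginj _ (by omega) _ (by omega)
          rw [← hFj1, ← hFj2, hF12]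
        have := hdivj j1 i1 (by omega)
        have := hdivj j2 i2 (by omega)
        rw [← hdivj j1 i1 (by omega), ← hdivj j2 i2 (by omega), heq]
    have hcount : q ≤ s + (2*t - 2) := by
      have : BB.card ≤ 2*t - 2 := le_trans hBBbad hbadcard
      omega
    -- final arithmetic
    have f1 : ((m:ℝ)+1) * q + ((n % (m+1) : ℕ) : ℝ) = n := by exact_mod_cast hdiv
    have f2 : ((n % (m+1) : ℕ) : ℝ) ≤ (m:ℝ) := by
      have h' : n % (m+1) ≤ m := by omega
      exact_mod_cast h'
    have f3 : (q:ℝ) ≤ (s:ℝ) + 2*(t:ℝ) - 2 := by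
      have h' : (q:ℝ) ≤ (s:ℝ) + ((2*t-2 : ℕ):ℝ) := by exact_mod_cast hcount
      have h'' : ((2*t-2 : ℕ):ℝ) = 2*(t:ℝ) - 2 := by
        have h2t : (2:ℕ) ≤ 2*t := by omega
        push_cast [Nat.cast_sub h2t]
        ring
      rw [h''] at h'
      linarith
    have f4 : (2:ℝ) ≤ (m:ℝ) := by exact_mod_cast hm
    have f5 : (2:ℝ) ≤ (t:ℝ) := by exact_mod_cast ht
    exact arith_final n s q m t (((n % (m+1) : ℕ)) : ℝ) f1 f2 f3 f4 f5
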